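/- Let Q be a small poset in which every subset has a join (least upper bound). Then Q, regarded as a category (with a unique morphism p → q exactly when p ≤ q), has enough subobjects: every presheaf P : Qᵒᵖ → Set that preserves small products and admits a monomorphism into a representable presheaf Q(−, q) is itself representable. -/

import Mathlib

open CategoryTheory CategoryTheory.Limits

universe u

/-- Statement 15: A small poset `Q` in which every subset has a join, regarded as a category,
has enough subobjects: every presheaf `P : Qᵒᵖ ⥤ Set` that preserves small products and
admits a monomorphism (a componentwise injective natural transformation) into a
representable presheaf `Q(-, q)` is itself representable. -/
theorem completeJoinPoset_hasEnoughSubobjects (Q : Type u) [CompleteSemilatticeSup Q]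
    (P : Qᵒᵖ ⥤ Type u)
    (hP : ∀ ι : Type u, PreservesLimitsOfShape (Discrete ι) P)
    (q : Q) (f : P ⟶ yoneda.obj q)
    (hf : ∀ A : Qᵒᵖ, Function.Injective (f.app A)) :
    P.IsRepresentable := by
  classical
  -- each value of P is a subsingleton
  have hsub : ∀ A : Qᵒᵖ, Subsingleton (P.obj A) := fun A =>
    ⟨fun a b => hf A (Subsingleton.elim (α := A.unop ⟶ q) _ _)⟩
  set S : Set Q := {p : Q | Nonempty (P.obj (Opposite.op p))} with hS
  set r : Q := sSup S with hr
  -- limit cone in Qᵒᵖ over the discrete diagram of elements of S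
  let F : Discrete (↥S) ⥤ Qᵒᵖ := Discrete.functor (fun s => Opposite.op (s : Q))
  let c : Fan (fun s : ↥S => Opposite.op (s : Q)) :=
    Fan.mk (Opposite.op r) (fun s => (homOfLE (le_sSup s.2)).op)
  have hl : IsLimit c :=
    mkFanLimit c
      (fun t => (homOfLE (sSup_le (fun p hp => (t.proj ⟨p, hp⟩).unop.le))).op)
      (by intros; apply Subsingleton.elim)
      (by intros; apply Subsingleton.elim)
  haveI := hP (↥S)
  have hl' := isLimitOfPreserves P hl
  -- a cone over the mapped diagram with point PUnit
  let d : Cone (F ⋙ P) :=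
    { pt := PUnit
      π := Discrete.natTrans (fun s => TypeCat.ofHom (fun _ => s.as.2.some)) }
  have x : P.obj (Opposite.op r) := hl'.lift d PUnit.unit
  -- P is represented by r
  refine ⟨r, ⟨{ homEquiv := fun {p} => ?_, homEquiv_comp := ?_ }⟩⟩
  · exact
    { toFun := fun h => P.map h.op x
      invFun := fun y => homOfLE (le_sSup ⟨y⟩)
      left_inv := fun h => Subsingleton.elim _ _
      right_inv := fun y => @Subsingleton.elim _ (hsub _) _ _ }
  · intro X X' g h
    exact @Subsingleton.elim _ (hsub _) _ _
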